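/- Let Z be a symmetric irreducible random walk on ℤ whose step kernel has finite third absolute moment. Then sup over k ≥ 1 of E^k[|Z(τ_{(−∞,0]})|] (the expected overshoot below 0 starting from k) is finite. -/

import Mathlib

open MeasureTheory ProbabilityTheory Finset Filter

/-- Discrete-time random walk on ℤ started at `x`, built from the step sequence `ξ`. -/
def walk {Ω : Type*} (ξ : ℕ → Ω → ℤ) (x : ℤ) (ω : Ω) (n : ℕ) : ℤ :=
  x + ∑ i ∈ Finset.range n, ξ i ω

open scoped Classical in
/-- The overshoot \`|Z(τ_{(−∞,0]})|\` of the walk started at \`x\` (and \`0\` if the walk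
never enters \`(−∞,0]\`). -/
noncomputable def overshoot {Ω : Type*} (ξ : ℕ → Ω → ℤ) (x : ℤ) (ω : Ω) : ℤ :=
  if h : ∃ n : ℕ, walk ξ x ω n ≤ 0 then |walk ξ x ω (Nat.find h)| else 0

open scoped ENNReal

set_option linter.unusedSectionVars false

namespace Stmt11Aux

noncomputable def vfun (q : ℤ → ℝ≥0∞) (d : ℤ) : ℝ≥0∞ :=
  ∑' z : ℤ, q z * ((z - d).toNat : ℝ≥0∞)

/-- tail `T d = Σ_{z ≥ d} q z`. -/
noncomputable def Tfun (q : ℤ → ℝ≥0∞) (d : ℤ) : ℝ≥0∞ :=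
  ∑' z : ℤ, q z * (if d ≤ z then 1 else 0)

/-- the test function: `G x = Σ_j c_j (min x (j+1))⁺`. -/
noncomputable def Gfun (c : ℕ → ℝ≥0∞) (x : ℤ) : ℝ≥0∞ :=
  ∑' j : ℕ, c j * ((min x ((j : ℤ) + 1)).toNat : ℝ≥0∞)

lemma vfun_mono (q : ℤ → ℝ≥0∞) {d e : ℤ} (h : d ≤ e) : vfun q e ≤ vfun q d := by
  refine ENNReal.tsum_le_tsum fun z => mul_le_mul_right ?_ _
  have : (z - e).toNat ≤ (z - d).toNat := by omega
  exact_mod_cast this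

lemma vfun_succ_add (q : ℤ → ℝ≥0∞) (x : ℤ) :
    vfun q x + Tfun q x ≤ vfun q (x - 1) := by
  rw [vfun, vfun, Tfun, ← ENNReal.tsum_add]
  refine ENNReal.tsum_le_tsum fun z => ?_
  rw [← mul_add]
  refine mul_le_mul_right ?_ _
  split_ifs with h
  · have : (z - x).toNat + 1 ≤ (z - (x - 1)).toNat := by omega
    exact_mod_cast this
  · rw [add_zero]
    have : (z - x).toNat ≤ (z - (x - 1)).toNat := by omega
    exact_mod_cast this

lemma Tfun_le_one (q : ℤ → ℝ≥0∞) (hq1 : ∑' z : ℤ, q z = 1) (d : ℤ) : Tfun q d ≤ 1 := by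
  rw [← hq1]
  exact ENNReal.tsum_le_tsum fun z => by split_ifs <;> simp

lemma Tfun_pos (q : ℤ → ℝ≥0∞) {d : ℤ} (h : vfun q d ≠ 0) : Tfun q d ≠ 0 := by
  intro h0
  apply h
  rw [vfun, ENNReal.tsum_eq_zero]
  rw [Tfun, ENNReal.tsum_eq_zero] at h0
  intro z
  rcases le_or_gt z d with hz | hz
  · simp [show (z - d).toNat = 0 by omega]
  · have := h0 z
    rw [if_pos hz.le, mul_one] at this
    simp [this]

lemma vfun_zero_le (q : ℤ → ℝ≥0∞) (hq1 : ∑' z : ℤ, q z = 1) :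
    vfun q 0 ≤ vfun q 1 + 1 := by
  rw [vfun, vfun, ← hq1, ← ENNReal.tsum_add]
  refine ENNReal.tsum_le_tsum fun z => ?_
  calc q z * ((z - 0).toNat : ℝ≥0∞) ≤ q z * (((z - 1).toNat : ℝ≥0∞) + 1) := by
        refine mul_le_mul_right ?_ _
        have : (z - 0).toNat ≤ (z - 1).toNat + 1 := by omega
        exact_mod_cast this
    _ = q z * ((z - 1).toNat : ℝ≥0∞) + q z := by rw [mul_add, mul_one]

lemma tsum_int_split (h : ℤ → ℝ≥0∞) :
    ∑' z : ℤ, h z = (∑' n : ℕ, h ((n : ℤ) + 1)) + h 0 + ∑' n : ℕ, h (-((n : ℤ) + 1)) := by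
  have := tsum_of_add_one_of_neg_add_one (f := h) ENNReal.summable ENNReal.summable
  simpa using this

lemma vfun_eq_pos (q : ℤ → ℝ≥0∞) {d : ℤ} (hd : 0 ≤ d) :
    vfun q d = ∑' n : ℕ, q ((n : ℤ) + 1) * ((((n : ℤ) + 1 - d).toNat : ℝ≥0∞)) := by
  rw [vfun, tsum_int_split (fun z => q z * ((z - d).toNat : ℝ≥0∞))]
  have h1 : ((0 : ℤ) - d).toNat = 0 := by omega
  have h2 : ∀ n : ℕ, ((-((n : ℤ) + 1)) - d).toNat = 0 := fun n => by omega
  simp only [h1]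
  simp only [h2]
  simp

lemma Gfun_nonpos (c : ℕ → ℝ≥0∞) {x : ℤ} (hx : x ≤ 0) : Gfun c x = 0 := by
  rw [Gfun]
  have : ∀ j : ℕ, (min x ((j : ℤ) + 1)).toNat = 0 := fun j => by omega
  simp [this]

lemma Gfun_le (c : ℕ → ℝ≥0∞) (x : ℤ) : Gfun c x ≤ ∑' j : ℕ, c j * ((j + 1 : ℕ) : ℝ≥0∞) := by
  refine ENNReal.tsum_le_tsum fun j => mul_le_mul_right ?_ _
  have : (min x ((j : ℤ) + 1)).toNat ≤ j + 1 := by omega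
  exact_mod_cast this


set_option maxHeartbeats 2000000 in
lemma construct (q : ℤ → ℝ≥0∞) (hq1 : ∑' z : ℤ, q z = 1)
    (hV : (∑' j : ℕ, vfun q ((j : ℤ) + 1)) ≠ ∞)
    (hM3 : (∑' j : ℕ, ((j + 1 : ℕ) : ℝ≥0∞) * vfun q ((j : ℤ) + 1)) ≠ ∞) :
    ∃ c : ℕ → ℝ≥0∞, (∑' j, c j) ≠ ∞ ∧ (∑' j : ℕ, c j * ((j + 1 : ℕ) : ℝ≥0∞)) ≠ ∞ ∧
      ∀ x : ℤ, 1 ≤ x →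
        (1 + ∑' j, c j) * vfun q x
          ≤ ∑' j : ℕ, c j * vfun q (((x - ((j : ℤ) + 1)).natAbs : ℤ)) := by
  classical
  by_cases hv1 : vfun q 1 = 0
  · refine ⟨fun _ => 0, by simp, by simp, fun x hx => ?_⟩
    have : vfun q x = 0 := le_antisymm (hv1 ▸ vfun_mono q hx) (zero_le)
    simp [this]
  -- main case
  set vv : ℕ → ℝ≥0∞ := fun j => vfun q ((j : ℤ) + 1) with hvv
  set V : ℝ≥0∞ := ∑' j : ℕ, vv j with hVdef
  have hv1' : vv 0 = vfun q 1 := by norm_num [hvv]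
  have hvvleV : ∀ j, vv j ≤ V := fun j => ENNReal.le_tsum j
  have hVfin : V ≠ ∞ := hV
  set v0 : ℝ≥0∞ := vfun q 0 with hv0def
  have hv0ne : v0 ≠ 0 := by
    intro h
    exact hv1 (le_antisymm (h ▸ vfun_mono q zero_le_one) (zero_le))
  have hv0fin : v0 ≠ ∞ := by
    refine ne_top_of_le_ne_top ?_ (vfun_zero_le q hq1)
    exact ENNReal.add_ne_top.2 ⟨ne_top_of_le_ne_top hVfin (hv1' ▸ hvvleV 0), ENNReal.one_ne_top⟩
  set θ : ℝ≥0∞ := 2 / v0 with hθdef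
  have hθfin : θ ≠ ∞ := (ENNReal.div_lt_top ENNReal.ofNat_ne_top hv0ne).ne
  have hθv0 : θ * v0 = 2 := ENNReal.div_mul_cancel hv0ne hv0fin
  have hhalf : θ * (v0 / 4 + v0 / 4) = 1 := by
    have h44 : v0 / 4 + v0 / 4 = v0 / 2 := by
      rw [ENNReal.div_add_div_same, show v0 + v0 = 2 * v0 from (two_mul v0).symm,
        show (4 : ℝ≥0∞) = 2 * 2 by norm_num,
        ENNReal.mul_div_mul_left _ _ two_ne_zero ENNReal.ofNat_ne_top]
    rw [h44, ← mul_div_assoc, hθv0, ENNReal.div_self two_ne_zero ENNReal.ofNat_ne_top]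
  -- choose the cutoff
  have htail : Filter.Tendsto (fun i : ℕ => ∑' k : ℕ, vv (k + i)) Filter.atTop (nhds 0) :=
    ENNReal.tendsto_sum_nat_add vv hVfin
  have hquarter : (0 : ℝ≥0∞) < v0 / 4 := ENNReal.div_pos hv0ne (by norm_num)
  obtain ⟨N, hN⟩ := (ENNReal.tendsto_atTop_zero).1 htail (v0 / 4) hquarter
  set x₁ : ℕ := N + 1 with hx₁def
  set η : ℝ≥0∞ :=
    (1 + θ * (v0 + V)) * ∑ i ∈ Finset.range x₁, (vv i / Tfun q ((i : ℤ) + 1)) with hηdef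
  have hfactor_fin : (1 + θ * (v0 + V)) ≠ ∞ :=
    ENNReal.add_ne_top.2 ⟨ENNReal.one_ne_top,
      ENNReal.mul_ne_top hθfin (ENNReal.add_ne_top.2 ⟨hv0fin, hVfin⟩)⟩
  have hηfin : η ≠ ∞ := by
    refine ENNReal.mul_ne_top hfactor_fin (ENNReal.sum_ne_top.2 fun i _ => ?_)
    by_cases hvi : vv i = 0
    · simp [hvi]
    · exact (ENNReal.div_lt_top (ne_top_of_le_ne_top hVfin (hvvleV i))
        (Tfun_pos q hvi)).ne
  refine ⟨fun j => θ * vv j + (if j = 0 then η else 0), ?_, ?_, ?_⟩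
  · rw [ENNReal.tsum_add, ENNReal.tsum_mul_left, tsum_ite_eq]
    exact ENNReal.add_ne_top.2 ⟨ENNReal.mul_ne_top hθfin hVfin, hηfin⟩
  · have hsplit : (∑' j : ℕ, (θ * vv j + (if j = 0 then η else 0)) * ((j + 1 : ℕ) : ℝ≥0∞))
        = θ * (∑' j : ℕ, ((j + 1 : ℕ) : ℝ≥0∞) * vv j) + η := by
      rw [show (fun j : ℕ => (θ * vv j + (if j = 0 then η else 0)) * ((j + 1 : ℕ) : ℝ≥0∞))
          = fun j : ℕ => θ * (((j + 1 : ℕ) : ℝ≥0∞) * vv j)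
            + (if j = 0 then η * ((j + 1 : ℕ) : ℝ≥0∞) else 0) from ?_]
      · rw [ENNReal.tsum_add, ENNReal.tsum_mul_left]
        congr 1
        rw [tsum_eq_single 0 (by intro b hb; simp [hb])]
        norm_num
      · funext j
        split_ifs with h <;> ring
    rw [hsplit]
    exact ENNReal.add_ne_top.2 ⟨ENNReal.mul_ne_top hθfin hM3, hηfin⟩
  -- the main inequality
  intro x hx
  by_cases hvx : vfun q x = 0
  · simp [hvx]
  set β : ℝ≥0∞ := ∑' j : ℕ, (θ * vv j + (if j = 0 then η else 0)) with hβdef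
  have hβ : β = θ * V + η := by
    rw [hβdef, ENNReal.tsum_add, ENNReal.tsum_mul_left, tsum_ite_eq, hVdef]
  set xh : ℕ := x.toNat with hxhat
  have hxx : (xh : ℤ) = x := Int.toNat_of_nonneg (by omega)
  have hxh1 : 1 ≤ xh := by omega
  set R : ℝ≥0∞ := ∑' k : ℕ, vv (k + 2 * xh) with hRdef
  have hRV : R ≤ V := by
    rw [hVdef, ← Summable.sum_add_tsum_nat_add' (f := vv) (k := 2 * xh) ENNReal.summable, ← hRdef]
    exact le_add_self
  have hvx_eq : vv (xh - 1) = vfun q x := by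
    rw [hvv]
    simp only []
    congr 1
    omega
  set U' : ℝ≥0∞ := ∑ j ∈ (Finset.range (2 * xh)).erase (xh - 1), vv j with hU'def
  -- V decomposition
  have hVsplit : V = vfun q x + U' + R := by
    rw [hVdef, ← Summable.sum_add_tsum_nat_add' (f := vv) (k := 2 * xh) ENNReal.summable, ← hRdef]
    congr 1
    rw [← Finset.add_sum_erase _ vv (Finset.mem_range.2 (show xh - 1 < 2 * xh by omega)),
      hvx_eq, ← hU'def]
  -- lower bound for the RHS sum
  have hRHS : θ * (vfun q x * v0 + U' * vfun q x) + η * vfun q (x - 1)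
      ≤ ∑' j : ℕ, (θ * vv j + (if j = 0 then η else 0))
          * vfun q (((x - ((j : ℤ) + 1)).natAbs : ℤ)) := by
    have hterm : ∀ j ∈ Finset.range (2 * xh),
        θ * (vv j * (if j = xh - 1 then v0 else vfun q x))
            + (if j = 0 then η * vfun q (x - 1) else 0)
          ≤ (θ * vv j + (if j = 0 then η else 0))
            * vfun q (((x - ((j : ℤ) + 1)).natAbs : ℤ)) := by
      intro j hj
      rw [Finset.mem_range] at hj
      rw [add_mul]
      refine add_le_add ?_ ?_
      · rw [mul_assoc]
        refine mul_le_mul_right (mul_le_mul_right ?_ _) _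
        split_ifs with h
        · have hz : ((x - ((j : ℤ) + 1)).natAbs : ℤ) = 0 := by omega
          rw [hz]
        · exact vfun_mono q (by omega)
      · split_ifs with h
        · exact mul_le_mul_right (vfun_mono q (by omega)) _
        · exact zero_le
    calc θ * (vfun q x * v0 + U' * vfun q x) + η * vfun q (x - 1)
        = ∑ j ∈ Finset.range (2 * xh),
            (θ * (vv j * (if j = xh - 1 then v0 else vfun q x))
              + (if j = 0 then η * vfun q (x - 1) else 0)) := by
          rw [Finset.sum_add_distrib]
          congr 1
          · rw [← Finset.mul_sum]
            congr 1
            have hsum : ∑ j ∈ Finset.range (2 * xh), vv j * (if j = xh - 1 then v0 else vfun q x)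
                = vv (xh - 1) * v0
                  + ∑ j ∈ (Finset.range (2 * xh)).erase (xh - 1), vv j * vfun q x := by
              rw [← Finset.add_sum_erase _ (fun j => vv j * (if j = xh - 1 then v0 else vfun q x))
                (Finset.mem_range.2 (show xh - 1 < 2 * xh by omega)), if_pos rfl]
              congr 1
              exact Finset.sum_congr rfl fun j hj => by rw [if_neg (Finset.ne_of_mem_erase hj)]
            rw [hsum, hvx_eq, hU'def, Finset.sum_mul]
          · rw [Finset.sum_ite_eq' (Finset.range (2 * xh)) 0
              (fun _ => η * vfun q (x - 1)), if_pos (Finset.mem_range.2 (by omega))]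
      _ ≤ ∑ j ∈ Finset.range (2 * xh), (θ * vv j + (if j = 0 then η else 0))
            * vfun q (((x - ((j : ℤ) + 1)).natAbs : ℤ)) := Finset.sum_le_sum hterm
      _ ≤ _ := ENNReal.sum_le_tsum _
  -- core inequality
  have hcore : vfun q x + θ * vfun q x * vfun q x + θ * R * vfun q x + η * vfun q x
      ≤ θ * (vfun q x * v0) + η * vfun q (x - 1) := by
    have hrw2 : θ * (vfun q x * v0) = 2 * vfun q x := by
      rw [mul_comm (vfun q x) v0, ← mul_assoc, hθv0]
    rcases le_or_gt (x₁ : ℤ) x with hA | hB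
    -- far case
    · have hA1 : vfun q x ≤ v0 / 4 := by
        have h0 : vfun q x = vv (0 + (xh - 1)) := by rw [Nat.zero_add, hvx_eq]
        rw [h0]
        exact le_trans (ENNReal.le_tsum (f := fun k => vv (k + (xh - 1))) 0)
          (hN (xh - 1) (by omega))
      have hA2 : R ≤ v0 / 4 := by
        rw [hRdef]
        exact hN (2 * xh) (by omega)
      have hb1 : θ * (vfun q x + R) ≤ 1 :=
        le_trans (mul_le_mul_right (add_le_add hA1 hA2) θ) hhalf.le
      have hrw : vfun q x + θ * vfun q x * vfun q x + θ * R * vfun q x + η * vfun q x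
          = vfun q x + (θ * (vfun q x + R)) * vfun q x + η * vfun q x := by ring
      rw [hrw, hrw2]
      calc vfun q x + (θ * (vfun q x + R)) * vfun q x + η * vfun q x
          ≤ vfun q x + 1 * vfun q x + η * vfun q x := by
            exact add_le_add (add_le_add_right (mul_le_mul_left hb1 _) _) le_rfl
        _ = 2 * vfun q x + η * vfun q x := by ring
        _ ≤ 2 * vfun q x + η * vfun q (x - 1) :=
            add_le_add_right (mul_le_mul_right (vfun_mono q (by omega)) η) _
    -- near case
    · have hTx0 : Tfun q x ≠ 0 := Tfun_pos q hvx
      have hTxfin : Tfun q x ≠ ∞ :=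
        ne_top_of_le_ne_top ENNReal.one_ne_top (Tfun_le_one q hq1 x)
      have hcast : ((xh - 1 : ℕ) : ℤ) + 1 = x := by omega
      have hterm1 : vfun q x / Tfun q x
          ≤ ∑ i ∈ Finset.range x₁, (vv i / Tfun q ((i : ℤ) + 1)) := by
        have h1 : vfun q x / Tfun q x = vv (xh - 1) / Tfun q (((xh - 1 : ℕ) : ℤ) + 1) := by
          rw [hvx_eq, hcast]
        rw [h1]
        exact Finset.single_le_sum (f := fun i : ℕ => vv i / Tfun q ((i : ℤ) + 1))
          (fun i _ => zero_le) (Finset.mem_range.2 (show xh - 1 < x₁ by omega))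
      have hη1 : (1 + θ * (v0 + V)) * (vfun q x / Tfun q x) ≤ η := by
        rw [hηdef]
        exact mul_le_mul_right hterm1 _
      have hηT : (1 + θ * (v0 + V)) * vfun q x ≤ η * Tfun q x := by
        have h2 := mul_le_mul_left hη1 (Tfun q x)
        rw [mul_assoc, ENNReal.div_mul_cancel hTx0 hTxfin] at h2
        exact h2
      have hmid : vfun q x + θ * R * vfun q x + η * vfun q x ≤ η * vfun q (x - 1) := by
        calc vfun q x + θ * R * vfun q x + η * vfun q x
            ≤ vfun q x + θ * (v0 + V) * vfun q x + η * vfun q x := by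
              exact add_le_add (add_le_add_right
                (mul_le_mul_left (mul_le_mul_right (le_trans hRV le_add_self) θ) _) _) le_rfl
          _ = (1 + θ * (v0 + V)) * vfun q x + η * vfun q x := by ring
          _ ≤ η * Tfun q x + η * vfun q x := add_le_add_left hηT _
          _ = η * (vfun q x + Tfun q x) := by ring
          _ ≤ η * vfun q (x - 1) := mul_le_mul_right (vfun_succ_add q x) η
      calc vfun q x + θ * vfun q x * vfun q x + θ * R * vfun q x + η * vfun q x
          = θ * vfun q x * vfun q x + (vfun q x + θ * R * vfun q x + η * vfun q x) := by ring
        _ ≤ θ * (vfun q x * v0) + η * vfun q (x - 1) := by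
            refine add_le_add ?_ hmid
            rw [mul_assoc]
            exact mul_le_mul_right (mul_le_mul_right (vfun_mono q (by omega)) _) θ
  -- assemble
  refine le_trans ?_ hRHS
  rw [hβ, hVsplit]
  have hexp : (1 + (θ * (vfun q x + U' + R) + η)) * vfun q x
      = (vfun q x + θ * vfun q x * vfun q x + θ * R * vfun q x + η * vfun q x)
        + θ * U' * vfun q x := by ring
  have hexp2 : θ * (vfun q x * v0 + U' * vfun q x) + η * vfun q (x - 1)
      = (θ * (vfun q x * v0) + η * vfun q (x - 1)) + θ * U' * vfun q x := by ring
  rw [hexp, hexp2]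
  exact add_le_add_left hcore _

/-- The key supermartingale inequality for `G`. -/
lemma key (q : ℤ → ℝ≥0∞) (hsym : ∀ z, q (-z) = q z) (hq1 : ∑' z : ℤ, q z = 1)
    (c : ℕ → ℝ≥0∞) (hb : (∑' j, c j) ≠ ∞) (hv0 : vfun q 0 ≠ ∞)
    (hCC : ∀ x : ℤ, 1 ≤ x →
      (1 + ∑' j, c j) * vfun q x ≤ ∑' j : ℕ, c j * vfun q (((x - ((j : ℤ) + 1)).natAbs : ℤ)))
    {x : ℤ} (hx : 1 ≤ x) :
    (∑' z : ℤ, q z * Gfun c (x + z)) + vfun q x ≤ Gfun c x := by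
  classical
  set φ : ℕ → ℤ → ℝ≥0∞ := fun j t => ((min t ((j : ℤ) + 1)).toNat : ℝ≥0∞) with hφ
  set T1 : ℝ≥0∞ := ∑' n : ℕ, q ((n : ℤ) + 1) with hT1
  set β : ℝ≥0∞ := ∑' j, c j with hβ
  -- pointwise identity
  have hpt : ∀ (j n : ℕ),
      φ j (x + ((n : ℤ) + 1)) + φ j (x - ((n : ℤ) + 1))
        + ((((n : ℤ) + 1 - ((x - ((j : ℤ) + 1)).natAbs : ℤ)).toNat : ℝ≥0∞))
      = 2 * φ j x + ((((n : ℤ) + 1 - x).toNat : ℝ≥0∞)) := by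
    intro j n
    have h : (min (x + ((n : ℤ) + 1)) ((j : ℤ) + 1)).toNat
        + (min (x - ((n : ℤ) + 1)) ((j : ℤ) + 1)).toNat
        + ((n : ℤ) + 1 - ((x - ((j : ℤ) + 1)).natAbs : ℤ)).toNat
        = 2 * (min x ((j : ℤ) + 1)).toNat + ((n : ℤ) + 1 - x).toNat := by omega
    simp only [hφ]
    exact_mod_cast h
  -- sum over n with weights q(n+1), for fixed j
  have hsumn : ∀ j : ℕ,
      (∑' n : ℕ, q ((n : ℤ) + 1) * φ j (x + ((n : ℤ) + 1)))
        + (∑' n : ℕ, q ((n : ℤ) + 1) * φ j (x - ((n : ℤ) + 1)))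
        + vfun q (((x - ((j : ℤ) + 1)).natAbs : ℤ))
      = 2 * T1 * φ j x + vfun q x := by
    intro j
    have lhs_eq : (∑' n : ℕ, q ((n : ℤ) + 1) * φ j (x + ((n : ℤ) + 1)))
        + (∑' n : ℕ, q ((n : ℤ) + 1) * φ j (x - ((n : ℤ) + 1)))
        + vfun q (((x - ((j : ℤ) + 1)).natAbs : ℤ))
        = ∑' n : ℕ, q ((n : ℤ) + 1) * (φ j (x + ((n : ℤ) + 1)) + φ j (x - ((n : ℤ) + 1))
            + ((((n : ℤ) + 1 - ((x - ((j : ℤ) + 1)).natAbs : ℤ)).toNat : ℝ≥0∞))) := by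
      rw [vfun_eq_pos q (by positivity)]
      simp only [mul_add, ENNReal.tsum_add]
    have rhs_eq : (2 : ℝ≥0∞) * T1 * φ j x + vfun q x
        = ∑' n : ℕ, q ((n : ℤ) + 1) * (2 * φ j x + ((((n : ℤ) + 1 - x).toNat : ℝ≥0∞))) := by
      rw [vfun_eq_pos q (le_trans zero_le_one hx)]
      simp only [mul_add, ENNReal.tsum_add]
      congr 1
      rw [hT1, ENNReal.tsum_mul_right]
      ring
    rw [lhs_eq, rhs_eq]
    exact tsum_congr fun n => by rw [hpt j n]
  -- swap helper
  have swap : ∀ g : ℕ → ℤ, (∑' n : ℕ, q ((n : ℤ) + 1) * Gfun c (g n))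
      = ∑' j : ℕ, c j * ∑' n : ℕ, q ((n : ℤ) + 1) * φ j (g n) := by
    intro g
    calc (∑' n : ℕ, q ((n : ℤ) + 1) * Gfun c (g n))
        = ∑' (n : ℕ) (j : ℕ), c j * (q ((n : ℤ) + 1) * φ j (g n)) := by
          refine tsum_congr fun n => ?_
          rw [Gfun, ← ENNReal.tsum_mul_left]
          refine tsum_congr fun j => ?_
          simp only [hφ]; ring
      _ = ∑' (j : ℕ) (n : ℕ), c j * (q ((n : ℤ) + 1) * φ j (g n)) := ENNReal.tsum_comm
      _ = ∑' j : ℕ, c j * ∑' n : ℕ, q ((n : ℤ) + 1) * φ j (g n) := by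
          refine tsum_congr fun j => ?_
          rw [ENNReal.tsum_mul_left]
  -- multiply by c j and sum over j
  have hsumj :
      (∑' n : ℕ, q ((n : ℤ) + 1) * Gfun c (x + ((n : ℤ) + 1)))
        + (∑' n : ℕ, q ((n : ℤ) + 1) * Gfun c (x - ((n : ℤ) + 1)))
        + (∑' j : ℕ, c j * vfun q (((x - ((j : ℤ) + 1)).natAbs : ℤ)))
      = 2 * T1 * Gfun c x + β * vfun q x := by
    rw [swap (fun n => x + ((n : ℤ) + 1)), swap (fun n => x - ((n : ℤ) + 1))]
    rw [← ENNReal.tsum_add, ← ENNReal.tsum_add]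
    have : ∀ j : ℕ,
        c j * (∑' n : ℕ, q ((n : ℤ) + 1) * φ j (x + ((n : ℤ) + 1)))
          + c j * (∑' n : ℕ, q ((n : ℤ) + 1) * φ j (x - ((n : ℤ) + 1)))
          + c j * vfun q (((x - ((j : ℤ) + 1)).natAbs : ℤ))
        = c j * (2 * T1 * φ j x) + c j * vfun q x := by
      intro j
      rw [← mul_add, ← mul_add, ← mul_add, hsumn j]
    calc ∑' j : ℕ, (c j * (∑' n : ℕ, q ((n : ℤ) + 1) * φ j (x + ((n : ℤ) + 1)))
          + c j * (∑' n : ℕ, q ((n : ℤ) + 1) * φ j (x - ((n : ℤ) + 1)))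
          + c j * vfun q (((x - ((j : ℤ) + 1)).natAbs : ℤ)))
        = ∑' j : ℕ, (c j * (2 * T1 * φ j x) + c j * vfun q x) := tsum_congr this
      _ = 2 * T1 * Gfun c x + β * vfun q x := by
          rw [ENNReal.tsum_add]
          congr 1
          · simp only [hφ]
            rw [Gfun]
            exact (tsum_congr fun j => by ring).trans ENNReal.tsum_mul_left
          · rw [hβ, ENNReal.tsum_mul_right]
  -- apply hCC and cancel
  have hvx_fin : β * vfun q x ≠ ∞ := by
    refine ENNReal.mul_ne_top hb ?_
    exact ne_top_of_le_ne_top hv0 (vfun_mono q (by omega))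
  have step : (∑' n : ℕ, q ((n : ℤ) + 1) * Gfun c (x + ((n : ℤ) + 1)))
        + (∑' n : ℕ, q ((n : ℤ) + 1) * Gfun c (x - ((n : ℤ) + 1)))
        + vfun q x ≤ 2 * T1 * Gfun c x := by
    have h1 : (∑' n : ℕ, q ((n : ℤ) + 1) * Gfun c (x + ((n : ℤ) + 1)))
        + (∑' n : ℕ, q ((n : ℤ) + 1) * Gfun c (x - ((n : ℤ) + 1)))
        + ((1 + β) * vfun q x)
        ≤ 2 * T1 * Gfun c x + β * vfun q x := by
      rw [← hsumj]
      exact add_le_add_right (hCC x hx) _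
    rw [add_mul, one_mul, ← add_assoc] at h1
    exact (ENNReal.add_le_add_iff_right hvx_fin).1 h1
  -- final assembly
  have hsplit : (∑' z : ℤ, q z * Gfun c (x + z))
      = (∑' n : ℕ, q ((n : ℤ) + 1) * Gfun c (x + ((n : ℤ) + 1))) + q 0 * Gfun c x
        + (∑' n : ℕ, q ((n : ℤ) + 1) * Gfun c (x - ((n : ℤ) + 1))) := by
    rw [tsum_int_split (fun z => q z * Gfun c (x + z))]
    congr 1
    · congr 1
      rw [add_zero]
    · exact tsum_congr fun n => by rw [hsym ((n : ℤ) + 1), ← sub_eq_add_neg]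
  have hone : 2 * T1 + q 0 = 1 := by
    rw [← hq1, tsum_int_split q]
    have : ∑' n : ℕ, q (-((n : ℤ) + 1)) = T1 := tsum_congr fun n => hsym _
    rw [this, hT1]
    ring
  rw [hsplit]
  have hre : ((∑' n : ℕ, q ((n : ℤ) + 1) * Gfun c (x + ((n : ℤ) + 1))) + q 0 * Gfun c x
        + (∑' n : ℕ, q ((n : ℤ) + 1) * Gfun c (x - ((n : ℤ) + 1)))) + vfun q x
      = ((∑' n : ℕ, q ((n : ℤ) + 1) * Gfun c (x + ((n : ℤ) + 1)))
        + (∑' n : ℕ, q ((n : ℤ) + 1) * Gfun c (x - ((n : ℤ) + 1))) + vfun q x)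
        + q 0 * Gfun c x := by ring
  rw [hre]
  refine (add_le_add_left step (q 0 * Gfun c x)).trans ?_
  rw [← add_mul, hone, one_mul]

lemma inner_gen (m : ℕ) (g : ℕ → ℝ≥0∞) (B : ℝ≥0∞)
    (hzero : ∀ j, m ≤ j → g j = 0) (hle : ∀ j, g j ≤ B) :
    (∑' j : ℕ, g j) ≤ (m : ℝ≥0∞) * B := by
  rw [tsum_eq_sum (s := Finset.range m) (fun j hj => hzero j (by simpa using hj))]
  calc ∑ j ∈ Finset.range m, g j ≤ ∑ j ∈ Finset.range m, B :=
      Finset.sum_le_sum fun j _ => hle j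
    _ = m * B := by rw [Finset.sum_const, Finset.card_range, nsmul_eq_mul]

lemma sum_vfun_weighted (q : ℤ → ℝ≥0∞) (w : ℕ → ℝ≥0∞) :
    ∑' j : ℕ, w j * vfun q ((j : ℤ) + 1)
      = ∑' z : ℤ, q z * (∑' j : ℕ, w j * (((z - ((j : ℤ) + 1)).toNat : ℕ) : ℝ≥0∞)) := by
  calc ∑' j : ℕ, w j * vfun q ((j : ℤ) + 1)
      = ∑' (j : ℕ) (z : ℤ), w j * (q z * (((z - ((j : ℤ) + 1)).toNat : ℕ) : ℝ≥0∞)) := by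
        refine tsum_congr fun j => ?_
        rw [vfun, ← ENNReal.tsum_mul_left]
    _ = ∑' (z : ℤ) (j : ℕ), w j * (q z * (((z - ((j : ℤ) + 1)).toNat : ℕ) : ℝ≥0∞)) :=
        ENNReal.tsum_comm
    _ = ∑' z : ℤ, q z * (∑' j : ℕ, w j * (((z - ((j : ℤ) + 1)).toNat : ℕ) : ℝ≥0∞)) := by
        refine tsum_congr fun z => ?_
        rw [← ENNReal.tsum_mul_left]
        exact tsum_congr fun j => by ring

lemma sum_vfun_le_sq (q : ℤ → ℝ≥0∞) :
    (∑' j : ℕ, vfun q ((j : ℤ) + 1)) ≤ ∑' z : ℤ, q z * ((z.toNat : ℝ≥0∞)) ^ 2 := by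
  have h := sum_vfun_weighted q (fun _ => 1)
  simp only [one_mul] at h
  rw [h]
  refine ENNReal.tsum_le_tsum fun z => mul_le_mul_right ?_ _
  have := inner_gen z.toNat (fun j => (((z - ((j : ℤ) + 1)).toNat : ℕ) : ℝ≥0∞))
    ((z.toNat : ℝ≥0∞))
    (fun j hj => by
      have : (z - ((j : ℤ) + 1)).toNat = 0 := by omega
      simp [this])
    (fun j => by
      show (((z - ((j : ℤ) + 1)).toNat : ℕ) : ℝ≥0∞) ≤ _
      have : (z - ((j : ℤ) + 1)).toNat ≤ z.toNat := by omega
      exact_mod_cast this)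
  calc (∑' j : ℕ, (((z - ((j : ℤ) + 1)).toNat : ℕ) : ℝ≥0∞)) ≤ _ := this
    _ = ((z.toNat : ℝ≥0∞)) ^ 2 := (sq _).symm

lemma sum_vfun_le_cube (q : ℤ → ℝ≥0∞) :
    (∑' j : ℕ, ((j + 1 : ℕ) : ℝ≥0∞) * vfun q ((j : ℤ) + 1))
      ≤ ∑' z : ℤ, q z * ((z.toNat : ℝ≥0∞)) ^ 3 := by
  rw [sum_vfun_weighted q (fun j => ((j + 1 : ℕ) : ℝ≥0∞))]
  refine ENNReal.tsum_le_tsum fun z => mul_le_mul_right ?_ _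
  have := inner_gen z.toNat
    (fun j => ((j + 1 : ℕ) : ℝ≥0∞) * (((z - ((j : ℤ) + 1)).toNat : ℕ) : ℝ≥0∞))
    (((z.toNat : ℝ≥0∞)) ^ 2)
    (fun j hj => by
      have : (z - ((j : ℤ) + 1)).toNat = 0 := by omega
      simp [this])
    (fun j => by
      show ((j + 1 : ℕ) : ℝ≥0∞) * (((z - ((j : ℤ) + 1)).toNat : ℕ) : ℝ≥0∞) ≤ _
      rcases le_or_gt z.toNat j with hj | hj
      · have : (z - ((j : ℤ) + 1)).toNat = 0 := by omega
        simp [this]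
      · have h1 : ((j + 1 : ℕ) : ℝ≥0∞) ≤ (z.toNat : ℝ≥0∞) := by
          exact_mod_cast Nat.succ_le_of_lt hj
        have h2 : (((z - ((j : ℤ) + 1)).toNat : ℕ) : ℝ≥0∞) ≤ (z.toNat : ℝ≥0∞) := by
          have : (z - ((j : ℤ) + 1)).toNat ≤ z.toNat := by omega
          exact_mod_cast this
        calc ((j + 1 : ℕ) : ℝ≥0∞) * (((z - ((j : ℤ) + 1)).toNat : ℕ) : ℝ≥0∞)
            ≤ (z.toNat : ℝ≥0∞) * (z.toNat : ℝ≥0∞) := mul_le_mul' h1 h2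
          _ = ((z.toNat : ℝ≥0∞)) ^ 2 := (sq _).symm)
  calc _ ≤ (z.toNat : ℝ≥0∞) * ((z.toNat : ℝ≥0∞)) ^ 2 := this
    _ = ((z.toNat : ℝ≥0∞)) ^ 3 := by ring

variable {Ω : Type*} [MeasurableSpace Ω]

lemma walk_succ (ξ : ℕ → Ω → ℤ) (x : ℤ) (ω : Ω) (n : ℕ) :
    walk ξ x ω (n + 1) = walk ξ x ω n + ξ n ω := by
  simp [walk, Finset.sum_range_succ, add_assoc]

lemma measurable_walk (ξ : ℕ → Ω → ℤ) (hmeas : ∀ i, Measurable (ξ i)) (x : ℤ) (n : ℕ) :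
    Measurable fun ω => walk ξ x ω n :=
  measurable_const.add (Finset.measurable_sum _ fun i _ => hmeas i)

lemma measurable_B (ξ : ℕ → Ω → ℤ) (hmeas : ∀ i, Measurable (ξ i)) (k : ℤ) (n : ℕ) (y : ℤ) :
    MeasurableSet {ω | (∀ m ≤ n, 0 < walk ξ k ω m) ∧ walk ξ k ω n = y} := by
  refine MeasurableSet.inter ?_ ((measurable_walk ξ hmeas k n) (measurableSet_singleton y))
  show MeasurableSet {ω | ∀ m ≤ n, 0 < walk ξ k ω m}
  have : {ω | ∀ m ≤ n, 0 < walk ξ k ω m} = ⋂ m ∈ Set.Iic n, {ω | 0 < walk ξ k ω m} := by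
    ext ω; simp [Set.mem_iInter]
  rw [this]
  exact MeasurableSet.biInter (Set.to_countable _)
    fun m _ => (measurable_walk ξ hmeas k m) measurableSet_Ioi

lemma indep_step (μ : Measure Ω) (ξ : ℕ → Ω → ℤ) (hmeas : ∀ i, Measurable (ξ i))
    (hiid : iIndepFun ξ μ) (k : ℤ) (n : ℕ) (y z : ℤ) :
    μ ({ω | (∀ m ≤ n, 0 < walk ξ k ω m) ∧ walk ξ k ω n = y} ∩ (ξ n ⁻¹' {z}))
      = μ {ω | (∀ m ≤ n, 0 < walk ξ k ω m) ∧ walk ξ k ω n = y} * μ (ξ n ⁻¹' {z}) := by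
  classical
  have hdisj : Disjoint (Finset.range n) ({n} : Finset ℕ) := by simp
  have hIF := hiid.indepFun_finset (Finset.range n) {n} hdisj hmeas
  set Fm : ((i : (Finset.range n : Finset ℕ)) → ℤ) → ℕ → ℤ :=
    fun g m => k + ∑ i ∈ Finset.range m, (if h : i ∈ Finset.range n then g ⟨i, h⟩ else 0)
      with hFmdef
  have hFmMeas : ∀ m, Measurable fun g => Fm g m := by
    intro m
    refine measurable_const.add (Finset.measurable_sum _ fun i _ => ?_)
    by_cases h : i ∈ Finset.range n
    · simp only [dif_pos h]
      exact measurable_pi_apply _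
    · simp only [dif_neg h]
      exact measurable_const
  set S : Set ((i : (Finset.range n : Finset ℕ)) → ℤ) :=
    {g | (∀ m ≤ n, 0 < Fm g m) ∧ Fm g n = y} with hSdef
  have hSmeas : MeasurableSet S := by
    refine MeasurableSet.inter ?_ ((hFmMeas n) (measurableSet_singleton y))
    show MeasurableSet {g | ∀ m ≤ n, 0 < Fm g m}
    have : {g | ∀ m ≤ n, 0 < Fm g m} = ⋂ m ∈ Set.Iic n, {g | 0 < Fm g m} := by
      ext g; simp [Set.mem_iInter]
    rw [this]
    exact MeasurableSet.biInter (Set.to_countable _) fun m _ => (hFmMeas m) measurableSet_Ioi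
  set T : Set ((i : ({n} : Finset ℕ)) → ℤ) :=
    {g | g ⟨n, Finset.mem_singleton_self n⟩ = z} with hTdef
  have hTmeas : MeasurableSet T := by
    have hm : Measurable fun g : (i : ({n} : Finset ℕ)) → ℤ => g ⟨n, Finset.mem_singleton_self n⟩ :=
      measurable_pi_apply _
    exact hm (measurableSet_singleton z)
  have hpre : (fun a (i : (Finset.range n : Finset ℕ)) => ξ i a) ⁻¹' S
      = {ω | (∀ m ≤ n, 0 < walk ξ k ω m) ∧ walk ξ k ω n = y} := by
    ext ω
    have hFw : ∀ m ≤ n, Fm (fun i : (Finset.range n : Finset ℕ) => ξ i ω) m = walk ξ k ω m := by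
      intro m hm
      simp only [hFmdef, walk]
      congr 1
      refine Finset.sum_congr rfl fun i hi => ?_
      rw [dif_pos (Finset.mem_range.2 (lt_of_lt_of_le (Finset.mem_range.1 hi) hm))]
    simp only [Set.mem_preimage, hSdef, Set.mem_setOf_eq]
    constructor
    · rintro ⟨h1, h2⟩
      exact ⟨fun m hm => (hFw m hm) ▸ h1 m hm, (hFw n le_rfl) ▸ h2⟩
    · rintro ⟨h1, h2⟩
      exact ⟨fun m hm => (hFw m hm).symm ▸ h1 m hm, (hFw n le_rfl).symm ▸ h2⟩
  have hpre2 : (fun a (i : ({n} : Finset ℕ)) => ξ i a) ⁻¹' T = ξ n ⁻¹' {z} := by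
    ext ω
    simp [hTdef]
  have := hIF.measure_inter_preimage_eq_mul S T hSmeas hTmeas
  rw [hpre, hpre2] at this
  exact this

lemma measurable_overshoot (ξ : ℕ → Ω → ℤ) (hmeas : ∀ i, Measurable (ξ i)) (k : ℤ) :
    Measurable (overshoot ξ k) := by
  classical
  refine measurable_to_countable' fun y => ?_
  have hdesc : overshoot ξ k ⁻¹' {y} =
      (⋃ n : ℕ, ({ω | ∀ m < n, 0 < walk ξ k ω m} ∩ {ω | walk ξ k ω n ≤ 0}
        ∩ {ω | |walk ξ k ω n| = y}))
      ∪ (if y = 0 then {ω | ∀ n : ℕ, 0 < walk ξ k ω n} else ∅) := by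
    ext ω
    simp only [Set.mem_preimage, Set.mem_singleton_iff, Set.mem_union, Set.mem_iUnion,
      Set.mem_inter_iff, Set.mem_setOf_eq]
    constructor
    · intro h
      by_cases hex : ∃ n : ℕ, walk ξ k ω n ≤ 0
      · left
        refine ⟨Nat.find hex, ⟨fun m hm => ?_, Nat.find_spec hex⟩, ?_⟩
        · have := Nat.find_min hex hm
          omega
        · rw [overshoot, dif_pos hex] at h
          exact h
      · right
        rw [overshoot, dif_neg hex] at h
        push_neg at hex
        rw [if_pos h.symm]
        exact fun n => by have := hex n; omega
    · intro h
      rcases h with ⟨n, ⟨h1, h2⟩, h3⟩ | h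
      · have hex : ∃ n : ℕ, walk ξ k ω n ≤ 0 := ⟨n, h2⟩
        have hfind : Nat.find hex = n := by
          rw [Nat.find_eq_iff]
          exact ⟨h2, fun m hm => by have := h1 m hm; omega⟩
        rw [overshoot, dif_pos hex, hfind]
        exact h3
      · by_cases hy : y = 0
        · rw [if_pos hy] at h
          have hex : ¬ ∃ n : ℕ, walk ξ k ω n ≤ 0 := by
            rintro ⟨n, hn⟩
            have := h n
            omega
          rw [overshoot, dif_neg hex, hy]
        · rw [if_neg hy] at h
          exact absurd h (Set.notMem_empty ω)
  rw [hdesc]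
  refine MeasurableSet.union ?_ ?_
  · refine MeasurableSet.iUnion fun n => ?_
    refine MeasurableSet.inter (MeasurableSet.inter ?_ ?_) ?_
    · show MeasurableSet {ω | ∀ m < n, 0 < walk ξ k ω m}
      have : {ω | ∀ m < n, 0 < walk ξ k ω m} = ⋂ m ∈ Set.Iio n, {ω | 0 < walk ξ k ω m} := by
        ext ω; simp [Set.mem_iInter]
      rw [this]
      exact MeasurableSet.biInter (Set.to_countable _)
        fun m _ => (measurable_walk ξ hmeas k m) measurableSet_Ioi
    · exact (measurable_walk ξ hmeas k n) measurableSet_Iic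
    · have habs : Measurable fun ω => |walk ξ k ω n| := by
        have hg : Measurable fun t : ℤ => |t| := measurable_from_top
        exact hg.comp (measurable_walk ξ hmeas k n)
      exact habs (measurableSet_singleton y)
  · split_ifs
    · have : {ω | ∀ n : ℕ, 0 < walk ξ k ω n} = ⋂ n : ℕ, {ω | 0 < walk ξ k ω n} := by
        ext ω; simp [Set.mem_iInter]
      rw [this]
      exact MeasurableSet.iInter fun n => (measurable_walk ξ hmeas k n) measurableSet_Ioi
    · exact MeasurableSet.empty

/-- the master bound on the overshoot integral. -/
lemma lint_bound (μ : Measure Ω) [IsProbabilityMeasure μ] (ξ : ℕ → Ω → ℤ)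
    (hmeas : ∀ i, Measurable (ξ i)) (hiid : iIndepFun ξ μ)
    (q : ℤ → ℝ≥0∞) (hq : ∀ i z, μ (ξ i ⁻¹' {z}) = q z)
    (hsym : ∀ z, q (-z) = q z)
    (c : ℕ → ℝ≥0∞)
    (hkey : ∀ y : ℤ, 1 ≤ y → (∑' z : ℤ, q z * Gfun c (y + z)) + vfun q y ≤ Gfun c y)
    (k : ℤ) (hk : 1 ≤ k) :
    ∫⁻ ω, ENNReal.ofReal ((overshoot ξ k ω : ℤ) : ℝ) ∂μ
      ≤ ∑' j : ℕ, c j * ((j + 1 : ℕ) : ℝ≥0∞) := by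
  classical
  set B : ℕ → ℤ → Set Ω :=
    fun n y => {ω | (∀ m ≤ n, 0 < walk ξ k ω m) ∧ walk ξ k ω n = y} with hBdef
  have hBempty : ∀ n (y : ℤ), y ≤ 0 → μ (B n y) = 0 := by
    intro n y hy
    have : B n y = ∅ := by
      ext ω
      simp only [hBdef, Set.mem_setOf_eq, Set.mem_empty_iff_false, iff_false, not_and]
      intro h1 h2
      have := h1 n le_rfl
      omega
    rw [this, measure_empty]
  -- one-step bound
  have hM1 : ∀ n (x : ℤ), μ (B (n + 1) x) ≤ ∑' y : ℤ, μ (B n y) * q (x - y) := by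
    intro n x
    have hsub : B (n + 1) x ⊆ ⋃ y : ℤ, (B n y ∩ ξ n ⁻¹' {x - y}) := by
      intro ω hω
      obtain ⟨h1, h2⟩ := hω
      refine Set.mem_iUnion.2 ⟨walk ξ k ω n, ⟨⟨fun m hm => h1 m (hm.trans n.le_succ), rfl⟩, ?_⟩⟩
      simp only [Set.mem_preimage, Set.mem_singleton_iff]
      have := walk_succ ξ k ω n
      omega
    calc μ (B (n + 1) x) ≤ μ (⋃ y : ℤ, (B n y ∩ ξ n ⁻¹' {x - y})) := measure_mono hsub
      _ ≤ ∑' y : ℤ, μ (B n y ∩ ξ n ⁻¹' {x - y}) := measure_iUnion_le _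
      _ = ∑' y : ℤ, μ (B n y) * q (x - y) := by
          refine tsum_congr fun y => ?_
          rw [indep_step μ ξ hmeas hiid k n y (x - y), hq n (x - y)]
  set A : ℕ → ℝ≥0∞ := fun n => ∑' y : ℤ, μ (B n y) * Gfun c y with hAdef
  set D : ℕ → ℝ≥0∞ := fun n => ∑' y : ℤ, μ (B n y) * vfun q y with hDdef
  have hA0 : A 0 ≤ Gfun c k := by
    show (∑' y : ℤ, μ (B 0 y) * Gfun c y) ≤ Gfun c k
    have h1 : ∀ y : ℤ, y ≠ k → μ (B 0 y) * Gfun c y = 0 := by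
      intro y hy
      have : B 0 y = ∅ := by
        ext ω
        simp only [hBdef, Set.mem_setOf_eq, Set.mem_empty_iff_false, iff_false, not_and]
        intro _
        simp only [walk, Finset.range_zero, Finset.sum_empty, add_zero]
        exact fun h => hy h.symm
      rw [this, measure_empty, zero_mul]
    rw [tsum_eq_single k h1]
    calc μ (B 0 k) * Gfun c k ≤ 1 * Gfun c k :=
        mul_le_mul_left prob_le_one _
      _ = Gfun c k := one_mul _
  -- the supermartingale step
  have hstepA : ∀ n, A (n + 1) + D n ≤ A n := by
    intro n
    have h1 : A (n + 1) ≤ ∑' y : ℤ, μ (B n y) * (∑' z : ℤ, q z * Gfun c (y + z)) := by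
      calc A (n + 1) ≤ ∑' x : ℤ, (∑' y : ℤ, μ (B n y) * q (x - y)) * Gfun c x :=
          ENNReal.tsum_le_tsum fun x => mul_le_mul_left (hM1 n x) _
        _ = ∑' (x : ℤ) (y : ℤ), μ (B n y) * q (x - y) * Gfun c x := by
            exact tsum_congr fun x => ENNReal.tsum_mul_right.symm
        _ = ∑' (y : ℤ) (x : ℤ), μ (B n y) * q (x - y) * Gfun c x := ENNReal.tsum_comm
        _ = ∑' y : ℤ, μ (B n y) * ∑' x : ℤ, q (x - y) * Gfun c x := by
            refine tsum_congr fun y => ?_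
            rw [← ENNReal.tsum_mul_left]
            exact tsum_congr fun x => by ring
        _ = ∑' y : ℤ, μ (B n y) * (∑' z : ℤ, q z * Gfun c (y + z)) := by
            refine tsum_congr fun y => ?_
            congr 1
            rw [← (Equiv.addLeft y).tsum_eq (fun x => q (x - y) * Gfun c x)]
            refine tsum_congr fun z => ?_
            simp only [Equiv.coe_addLeft]
            rw [add_sub_cancel_left]
    calc A (n + 1) + D n
        ≤ (∑' y : ℤ, μ (B n y) * (∑' z : ℤ, q z * Gfun c (y + z))) + D n :=
          add_le_add_left h1 _
      _ = ∑' y : ℤ, μ (B n y) * ((∑' z : ℤ, q z * Gfun c (y + z)) + vfun q y) := by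
          rw [hDdef]
          simp only [mul_add]
          rw [ENNReal.tsum_add]
      _ ≤ ∑' y : ℤ, μ (B n y) * Gfun c y := by
          refine ENNReal.tsum_le_tsum fun y => ?_
          rcases le_or_gt 1 y with hy | hy
          · exact mul_le_mul_right (hkey y hy) _
          · rw [hBempty n y (by omega), zero_mul, zero_mul]
      _ = A n := rfl
  -- telescoping
  have htel : ∀ N, (∑ n ∈ Finset.range N, D n) + A N ≤ A 0 := by
    intro N
    induction N with
    | zero => simp
    | succ N ih =>
        calc (∑ n ∈ Finset.range (N + 1), D n) + A (N + 1)
            = (∑ n ∈ Finset.range N, D n) + (A (N + 1) + D N) := by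
              rw [Finset.sum_range_succ]; ring
          _ ≤ (∑ n ∈ Finset.range N, D n) + A N := add_le_add_right (hstepA N) _
          _ ≤ A 0 := ih
  have hDsum : ∑' n : ℕ, D n ≤ Gfun c k := by
    refine le_trans (ENNReal.tsum_le_of_sum_range_le fun N => ?_) hA0
    exact le_trans le_self_add (htel N)
  -- the overshoot slices
  set H : ℕ → Set Ω :=
    fun n => {ω | (∀ m ≤ n, 0 < walk ξ k ω m) ∧ walk ξ k ω (n + 1) ≤ 0} with hHdef
  set fn : ℕ → Ω → ℝ≥0∞ :=
    fun n => Set.indicator (H n) (fun ω => (((- walk ξ k ω (n + 1)).toNat : ℕ) : ℝ≥0∞))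
      with hfndef
  have hHmeas : ∀ n, MeasurableSet (H n) := by
    intro n
    refine MeasurableSet.inter ?_ ((measurable_walk ξ hmeas k (n + 1)) measurableSet_Iic)
    show MeasurableSet {ω | ∀ m ≤ n, 0 < walk ξ k ω m}
    have : {ω | ∀ m ≤ n, 0 < walk ξ k ω m} = ⋂ m ∈ Set.Iic n, {ω | 0 < walk ξ k ω m} := by
      ext ω; simp [Set.mem_iInter]
    rw [this]
    exact MeasurableSet.biInter (Set.to_countable _)
      fun m _ => (measurable_walk ξ hmeas k m) measurableSet_Ioi
  have hfnmeas : ∀ n, Measurable (fn n) := by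
    intro n
    refine Measurable.indicator ?_ (hHmeas n)
    have hg : Measurable fun t : ℤ => ((t.neg.toNat : ℕ) : ℝ≥0∞) := measurable_from_top
    exact hg.comp (measurable_walk ξ hmeas k (n + 1))
  -- pointwise bound
  have hpt : ∀ ω, ENNReal.ofReal ((overshoot ξ k ω : ℤ) : ℝ) ≤ ∑' n : ℕ, fn n ω := by
    intro ω
    by_cases hex : ∃ n : ℕ, walk ξ k ω n ≤ 0
    · have hov : overshoot ξ k ω = |walk ξ k ω (Nat.find hex)| := by
        rw [overshoot, dif_pos hex]
      have hN0 : Nat.find hex ≠ 0 := by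
        intro h0
        have := Nat.find_spec hex
        rw [h0] at this
        simp only [walk, Finset.range_zero, Finset.sum_empty, add_zero] at this
        omega
      obtain ⟨n, hn⟩ := Nat.exists_eq_succ_of_ne_zero hN0
      have hspec : walk ξ k ω (n + 1) ≤ 0 := by
        have := Nat.find_spec hex
        rwa [hn] at this
      have hmem : ω ∈ H n := by
        refine ⟨fun m hm => ?_, hspec⟩
        have := Nat.find_min hex (show m < Nat.find hex by omega)
        omega
      have hval : ENNReal.ofReal ((overshoot ξ k ω : ℤ) : ℝ) = fn n ω := by
        rw [hfndef]
        simp only [Set.indicator_of_mem hmem]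
        rw [hov, hn, abs_of_nonpos hspec]
        have h1 : ((- walk ξ k ω (n + 1)).toNat : ℤ) = - walk ξ k ω (n + 1) :=
          Int.toNat_of_nonneg (by omega)
        have h2 : ((-walk ξ k ω (n + 1) : ℤ) : ℝ) = (((-walk ξ k ω (n + 1)).toNat : ℕ) : ℝ) := by
          exact_mod_cast (congrArg (fun t : ℤ => (t : ℝ)) h1).symm
        rw [h2, ENNReal.ofReal_natCast]
      rw [hval]
      exact ENNReal.le_tsum n
    · rw [overshoot, dif_neg hex]
      simp
  -- per-slice integral bound
  have hslice : ∀ n, ∫⁻ ω, fn n ω ∂μ ≤ D n := by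
    intro n
    set gn : Ω → ℝ≥0∞ := fun ω => ∑' (y : ℤ) (z : ℤ),
      Set.indicator (B n y ∩ ξ n ⁻¹' {z}) (fun _ => (((-(y + z)).toNat : ℕ) : ℝ≥0∞)) ω
      with hgndef
    have hpt2 : ∀ ω, fn n ω ≤ gn ω := by
      intro ω
      rw [hfndef, hgndef]
      by_cases hmem : ω ∈ H n
      · simp only [Set.indicator_of_mem hmem]
        have hmem2 : ω ∈ B n (walk ξ k ω n) ∩ ξ n ⁻¹' {ξ n ω} :=
          ⟨⟨hmem.1, rfl⟩, rfl⟩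
        calc (((- walk ξ k ω (n + 1)).toNat : ℕ) : ℝ≥0∞)
            = Set.indicator (B n (walk ξ k ω n) ∩ ξ n ⁻¹' {ξ n ω})
                (fun _ => (((-(walk ξ k ω n + ξ n ω)).toNat : ℕ) : ℝ≥0∞)) ω := by
              rw [Set.indicator_of_mem hmem2, ← walk_succ ξ k ω n]
          _ ≤ ∑' z : ℤ, Set.indicator (B n (walk ξ k ω n) ∩ ξ n ⁻¹' {z})
                (fun _ => (((-(walk ξ k ω n + z)).toNat : ℕ) : ℝ≥0∞)) ω :=
              ENNReal.le_tsum (ξ n ω)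
          _ ≤ _ := ENNReal.le_tsum (walk ξ k ω n)
      · simp only [Set.indicator_of_notMem hmem]
        exact zero_le
    calc ∫⁻ ω, fn n ω ∂μ ≤ ∫⁻ ω, gn ω ∂μ := lintegral_mono hpt2
      _ = ∑' (y : ℤ) (z : ℤ), (((-(y + z)).toNat : ℕ) : ℝ≥0∞) * μ (B n y ∩ ξ n ⁻¹' {z}) := by
          rw [hgndef]
          rw [lintegral_tsum fun y => ?_]
          · refine tsum_congr fun y => ?_
            rw [lintegral_tsum fun z => ?_]
            · refine tsum_congr fun z => ?_
              rw [lintegral_indicator_const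
                ((measurable_B ξ hmeas k n y).inter ((hmeas n) (measurableSet_singleton z)))]
            · exact (measurable_const.indicator
                ((measurable_B ξ hmeas k n y).inter ((hmeas n) (measurableSet_singleton z)))).aemeasurable
          · refine (Measurable.aemeasurable ?_)
            refine Measurable.ennreal_tsum fun z => ?_
            exact measurable_const.indicator
              ((measurable_B ξ hmeas k n y).inter ((hmeas n) (measurableSet_singleton z)))
      _ = ∑' y : ℤ, μ (B n y) * (∑' z : ℤ, q z * (((-(y + z)).toNat : ℕ) : ℝ≥0∞)) := by
          refine tsum_congr fun y => ?_
          rw [← ENNReal.tsum_mul_left]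
          refine tsum_congr fun z => ?_
          rw [indep_step μ ξ hmeas hiid k n y z, hq n z]
          ring
      _ = ∑' y : ℤ, μ (B n y) * vfun q y := by
          refine tsum_congr fun y => ?_
          congr 1
          rw [← (Equiv.neg ℤ).tsum_eq (fun z => q z * (((-(y + z)).toNat : ℕ) : ℝ≥0∞))]
          refine tsum_congr fun z => ?_
          simp only [Equiv.neg_apply]
          rw [hsym z]
          congr 2
          omega
      _ = D n := rfl
  -- put everything together
  calc ∫⁻ ω, ENNReal.ofReal ((overshoot ξ k ω : ℤ) : ℝ) ∂μ
      ≤ ∫⁻ ω, ∑' n : ℕ, fn n ω ∂μ := lintegral_mono hpt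
    _ = ∑' n : ℕ, ∫⁻ ω, fn n ω ∂μ := lintegral_tsum fun n => (hfnmeas n).aemeasurable
    _ ≤ ∑' n : ℕ, D n := ENNReal.tsum_le_tsum hslice
    _ ≤ Gfun c k := hDsum
    _ ≤ _ := Gfun_le c k

end Stmt11Aux

open Stmt11Aux in
set_option maxHeartbeats 1000000 in
/-- if the kernel has finite third absolute moment then the expected
overshoot below `0` is bounded uniformly in the starting point `k ≥ 1`. -/
theorem stmt11
    {Ω : Type*} [MeasurableSpace Ω] (μ : Measure Ω) [IsProbabilityMeasure μ]
    (p : ℤ → ℝ) (hp0 : ∀ z, 0 ≤ p z) (hp1 : HasSum p 1)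
    (hsymm : ∀ z, p (-z) = p z)
    (hirr : AddSubgroup.closure {z : ℤ | p z ≠ 0} = ⊤)
    (hmom : Summable fun z : ℤ => (z : ℝ) ^ 2 * p z)
    (ξ : ℕ → Ω → ℤ) (hmeas : ∀ i, Measurable (ξ i))
    (hiid : iIndepFun ξ μ)
    (hstep : ∀ i z, (μ {ω | ξ i ω = z}).toReal = p z)
    (hmom3 : Summable fun z : ℤ => |(z : ℝ)| ^ 3 * p z) :
    ∃ C : ℝ, ∀ k : ℕ, 1 ≤ k →
      (∫ ω, ((overshoot ξ (k : ℤ) ω : ℤ) : ℝ) ∂μ) ≤ C := by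
  classical
  set q : ℤ → ℝ≥0∞ := fun z => ENNReal.ofReal (p z) with hqdef
  have hq : ∀ i (z : ℤ), μ (ξ i ⁻¹' {z}) = q z := by
    intro i z
    show μ (ξ i ⁻¹' {z}) = ENNReal.ofReal (p z)
    rw [← hstep i z, ENNReal.ofReal_toReal (measure_ne_top μ _)]
    rfl
  have hsymq : ∀ z : ℤ, q (-z) = q z := fun z => by
    show ENNReal.ofReal (p (-z)) = ENNReal.ofReal (p z)
    exact congrArg ENNReal.ofReal (hsymm z)
  have hq1 : ∑' z : ℤ, q z = 1 := by
    have hdisj : Pairwise (Function.onFun Disjoint fun z : ℤ => ξ 0 ⁻¹' {z}) := by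
      intro a b hab
      refine Set.disjoint_left.2 fun ω h1 h2 => hab ?_
      simp only [Set.mem_preimage, Set.mem_singleton_iff] at h1 h2
      rw [← h1, ← h2]
    have hmeasz : ∀ z : ℤ, MeasurableSet (ξ 0 ⁻¹' {z}) :=
      fun z => (hmeas 0) (measurableSet_singleton z)
    have hiu := measure_iUnion (μ := μ) hdisj hmeasz
    have huniv : ⋃ z : ℤ, ξ 0 ⁻¹' {z} = Set.univ := by
      ext ω; simp
    rw [huniv] at hiu
    calc ∑' z : ℤ, q z = ∑' z : ℤ, μ (ξ 0 ⁻¹' {z}) := tsum_congr fun z => (hq 0 z).symm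
      _ = μ Set.univ := hiu.symm
      _ = 1 := measure_univ
  have hcast_le : ∀ (z : ℤ) (e : ℕ), ((z.toNat : ℝ)) ^ e ≤ |(z : ℝ)| ^ e := by
    intro z e
    refine pow_le_pow_left₀ (by positivity) ?_ e
    rw [← Int.cast_abs]
    have h2 : (z.toNat : ℤ) ≤ |z| := by
      rw [Int.abs_eq_natAbs]
      omega
    exact_mod_cast h2
  have hsq_fin : (∑' z : ℤ, q z * ((z.toNat : ℝ≥0∞)) ^ 2) ≠ ∞ := by
    have hle : (∑' z : ℤ, q z * ((z.toNat : ℝ≥0∞)) ^ 2)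
        ≤ ∑' z : ℤ, ENNReal.ofReal ((z : ℝ) ^ 2 * p z) := by
      refine ENNReal.tsum_le_tsum fun z => ?_
      show ENNReal.ofReal (p z) * ((z.toNat : ℝ≥0∞)) ^ 2 ≤ _
      calc ENNReal.ofReal (p z) * ((z.toNat : ℝ≥0∞)) ^ 2
          = ENNReal.ofReal (p z * ((z.toNat : ℝ)) ^ 2) := by
            rw [ENNReal.ofReal_mul (hp0 z)]
            congr 1
            rw [← ENNReal.ofReal_natCast (z.toNat), ← ENNReal.ofReal_pow (by positivity)]
        _ ≤ ENNReal.ofReal ((z : ℝ) ^ 2 * p z) := by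
            refine ENNReal.ofReal_le_ofReal ?_
            have h1 : ((z.toNat : ℝ)) ^ 2 ≤ (z : ℝ) ^ 2 := by
              calc ((z.toNat : ℝ)) ^ 2 ≤ |(z : ℝ)| ^ 2 := hcast_le z 2
                _ = (z : ℝ) ^ 2 := sq_abs _
            nlinarith [hp0 z]
    rw [← ENNReal.ofReal_tsum_of_nonneg (fun z => mul_nonneg (sq_nonneg _) (hp0 z)) hmom] at hle
    exact ne_top_of_le_ne_top ENNReal.ofReal_ne_top hle
  have hcube_fin : (∑' z : ℤ, q z * ((z.toNat : ℝ≥0∞)) ^ 3) ≠ ∞ := by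
    have hle : (∑' z : ℤ, q z * ((z.toNat : ℝ≥0∞)) ^ 3)
        ≤ ∑' z : ℤ, ENNReal.ofReal (|(z : ℝ)| ^ 3 * p z) := by
      refine ENNReal.tsum_le_tsum fun z => ?_
      show ENNReal.ofReal (p z) * ((z.toNat : ℝ≥0∞)) ^ 3 ≤ _
      calc ENNReal.ofReal (p z) * ((z.toNat : ℝ≥0∞)) ^ 3
          = ENNReal.ofReal (p z * ((z.toNat : ℝ)) ^ 3) := by
            rw [ENNReal.ofReal_mul (hp0 z)]
            congr 1
            rw [← ENNReal.ofReal_natCast (z.toNat), ← ENNReal.ofReal_pow (by positivity)]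
        _ ≤ ENNReal.ofReal (|(z : ℝ)| ^ 3 * p z) := by
            refine ENNReal.ofReal_le_ofReal ?_
            have h1 := hcast_le z 3
            nlinarith [hp0 z, abs_nonneg ((z : ℝ))]
    rw [← ENNReal.ofReal_tsum_of_nonneg
      (fun z => mul_nonneg (by positivity) (hp0 z)) hmom3] at hle
    exact ne_top_of_le_ne_top ENNReal.ofReal_ne_top hle
  have hV : (∑' j : ℕ, vfun q ((j : ℤ) + 1)) ≠ ∞ :=
    ne_top_of_le_ne_top hsq_fin (sum_vfun_le_sq q)
  have hM3 : (∑' j : ℕ, ((j + 1 : ℕ) : ℝ≥0∞) * vfun q ((j : ℤ) + 1)) ≠ ∞ :=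
    ne_top_of_le_ne_top hcube_fin (sum_vfun_le_cube q)
  obtain ⟨c, hb, hC0, hCC⟩ := construct q hq1 hV hM3
  have hv0fin : vfun q 0 ≠ ∞ := by
    refine ne_top_of_le_ne_top ?_ (vfun_zero_le q hq1)
    refine ENNReal.add_ne_top.2 ⟨?_, ENNReal.one_ne_top⟩
    refine ne_top_of_le_ne_top hV ?_
    have h0 := ENNReal.le_tsum (f := fun j : ℕ => vfun q ((j : ℤ) + 1)) 0
    simpa using h0
  have hkey : ∀ y : ℤ, 1 ≤ y →
      (∑' z : ℤ, q z * Gfun c (y + z)) + vfun q y ≤ Gfun c y :=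
    fun y hy => key q hsymq hq1 c hb hv0fin hCC hy
  refine ⟨(∑' j : ℕ, c j * ((j + 1 : ℕ) : ℝ≥0∞)).toReal, fun k hk => ?_⟩
  have hlint := lint_bound μ ξ hmeas hiid q hq hsymq c hkey (k : ℤ) (by exact_mod_cast hk)
  have hnn : 0 ≤ᵐ[μ] fun ω => ((overshoot ξ (k : ℤ) ω : ℤ) : ℝ) := by
    refine Filter.Eventually.of_forall fun ω => ?_
    have h0 : (0 : ℤ) ≤ overshoot ξ (k : ℤ) ω := by
      rw [overshoot]
      split_ifs with h
      · exact abs_nonneg _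
      · exact le_refl 0
    show (0 : ℝ) ≤ ((overshoot ξ (k : ℤ) ω : ℤ) : ℝ)
    exact_mod_cast h0
  have hmeasO : Measurable fun ω => ((overshoot ξ (k : ℤ) ω : ℤ) : ℝ) := by
    have hg : Measurable fun t : ℤ => (t : ℝ) := measurable_from_top
    exact hg.comp (measurable_overshoot ξ hmeas (k : ℤ))
  rw [integral_eq_lintegral_of_nonneg_ae hnn hmeasO.aestronglyMeasurable]
  exact ENNReal.toReal_mono hC0 hlint
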